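/- Let F̄, F̃, F̊ be invertible n×n real matrices, F = F̄ F̃⁻¹ F̊, B̊ = F̊ F̊ᵀ, B = F̄ F̃⁻¹ B̊ F̃⁻ᵀ F̄ᵀ, E = ½ (Fᵀ F − I), J̄ = det F̄, J̃ = det F̃, J̊ = det F̊, J = det F, and let λ, μ, α, θ, θ₀ be real scalars. Suppose P, σ are n×n real matrices satisfying P F̄ᵀ = J̄ σ and J σ = F Ŝ Fᵀ, where Ŝ = λ (tr E) I + 2μ E − α(θ − θ₀) I. Then P = J̃ J̊⁻¹ · ( (λ/2) tr(B − I) · I + μ (B − I) − α(θ − θ₀) · I ) · F̄ F̃⁻¹ B̊ F̃⁻ᵀ. -/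

import Mathlib

open Matrix

/-- Full reformulated thermoelastic St. Venant–Kirchhoff
constitutive law: with `P Fbarᵀ = Jbar σ`, `J σ = F Shat Fᵀ`, and
`Shat = λ (tr E) I + 2μ E − α(θ − θ₀) I`, one has
`P = Jtil Jring⁻¹ ((λ/2) tr(B − I) I + μ (B − I) − α(θ − θ₀) I) Fbar Ftil⁻¹ Bring Ftil⁻ᵀ`. -/
theorem st_venant_kirchhoff_first_piola_kirchhoff
    {n : ℕ} (Fbar Ftil Fring : Matrix (Fin n) (Fin n) ℝ)
    (hFbar : IsUnit Fbar.det) (hFtil : IsUnit Ftil.det) (hFring : IsUnit Fring.det)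
    (F Bring B E : Matrix (Fin n) (Fin n) ℝ)
    (hF : F = Fbar * Ftil⁻¹ * Fring) (hBring : Bring = Fring * Fringᵀ)
    (hB : B = Fbar * Ftil⁻¹ * Bring * Ftil⁻¹ᵀ * Fbarᵀ)
    (hE : E = (1 / 2 : ℝ) • (Fᵀ * F - 1))
    (Jbar Jtil Jring J : ℝ)
    (hJbar : Jbar = Fbar.det) (hJtil : Jtil = Ftil.det) (hJring : Jring = Fring.det) (hJ : J = F.det)
    (lam μ α θ θ₀ : ℝ) (P σ Shat : Matrix (Fin n) (Fin n) ℝ)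
    (hShat : Shat = (lam * E.trace) • (1 : Matrix (Fin n) (Fin n) ℝ)
      + (2 * μ) • E - (α * (θ - θ₀)) • (1 : Matrix (Fin n) (Fin n) ℝ))
    (hP : P * Fbarᵀ = Jbar • σ) (hσ : J • σ = F * Shat * Fᵀ) :
    P = (Jtil * Jring⁻¹) •
        (((lam / 2 * (B - 1).trace) • (1 : Matrix (Fin n) (Fin n) ℝ)
            + μ • (B - 1)
            - (α * (θ - θ₀)) • (1 : Matrix (Fin n) (Fin n) ℝ))
          * (Fbar * Ftil⁻¹ * Bring * Ftil⁻¹ᵀ)) := by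
  have hdetFbarT : IsUnit Fbarᵀ.det := by simpa [Matrix.det_transpose] using hFbar
  have hBFF : B = F * Fᵀ := by
    subst hF hBring hB
    simp [Matrix.transpose_mul, Matrix.mul_assoc]
  have hJunit : IsUnit F.det := by
    rw [hF, Matrix.det_mul, Matrix.det_mul]
    exact (hFbar.mul (Matrix.isUnit_nonsing_inv_det Ftil hFtil)).mul hFring
  have hJne : J ≠ 0 := by rw [hJ]; exact hJunit.ne_zero
  have hσ' : σ = J⁻¹ • (F * Shat * Fᵀ) := by
    rw [← hσ, smul_smul, inv_mul_cancel₀ hJne, one_smul]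
  have hP' : P = (Jbar • σ) * Fbarᵀ⁻¹ := by
    rw [← hP, Matrix.mul_nonsing_inv_cancel_right _ _ hdetFbarT]
  have htr : E.trace = 1 / 2 * (B - 1).trace := by
    rw [hE, hBFF]
    simp [Matrix.trace_sub, Matrix.trace_smul, Matrix.trace_mul_comm F Fᵀ, smul_eq_mul]
  have hkey : F * Shat * Fᵀ =
      ((lam / 2 * (B - 1).trace) • (1 : Matrix (Fin n) (Fin n) ℝ) + μ • (B - 1)
        - (α * (θ - θ₀)) • (1 : Matrix (Fin n) (Fin n) ℝ)) * B := by
    rw [hShat, htr, hE, hBFF]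
    simp only [Matrix.mul_add, Matrix.add_mul, Matrix.mul_sub, Matrix.sub_mul,
      Matrix.mul_smul, Matrix.smul_mul, Matrix.mul_one, Matrix.one_mul, smul_smul,
      Matrix.mul_assoc, smul_sub]
    ring_nf
  have hdetJ : J = Jbar * Jtil⁻¹ * Jring := by
    rw [hJ, hF, hJbar, hJtil, hJring]
    simp [Matrix.det_mul, Matrix.det_nonsing_inv, Ring.inverse_eq_inv']
  have hsc : Jbar * J⁻¹ = Jtil * Jring⁻¹ := by
    rw [hdetJ]
    have h1 : Jbar ≠ 0 := hJbar ▸ hFbar.ne_zero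
    have h2 : Jtil ≠ 0 := hJtil ▸ hFtil.ne_zero
    have h3 : Jring ≠ 0 := hJring ▸ hFring.ne_zero
    field_simp
  have hBF : B * Fbarᵀ⁻¹ = Fbar * Ftil⁻¹ * Bring * Ftil⁻¹ᵀ := by
    rw [hB, Matrix.mul_assoc _ Fbarᵀ, Matrix.mul_nonsing_inv _ hdetFbarT, Matrix.mul_one]
  rw [hP', hσ', hkey, smul_smul, hsc, Matrix.smul_mul, Matrix.mul_assoc, hBF]
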